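/- arXiv:1408.3706 — 3 statements merged into one kernel-verified Lean document; each statement's English description precedes it below -/
import Mathlib

section
/- Let n ≥ 2 and Λ' a proper subset of {1,…,n−1}. With b(i) := #{k : 1 ≤ k < i, k ∉ Λ'}, let a_{Λ'} be the real span of {H^i : i ∈ {1,…,n−1}, i ∉ Λ'} and n_{Λ'} := {X ∈ M_n(ℝ) : X_{ij} = 0 unless b(i) < b(j)}. Then the solvable subalgebra s_{Λ'} := a_{Λ'} + n_{Λ'} is autoparallel in sl(n,ℝ) for the product ∇_X Y := XY − (tr(XY)/n)·I_n: for all X, Y ∈ s_{Λ'} one has XY − (tr(XY)/n)·I_n ∈ s_{Λ'}. -/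
noncomputable section

/-- The block function `b(i) = #{k : 1 ≤ k < i, k ∉ Λ'}` (here `i : Fin n` is the
0-based index corresponding to the 1-based row index `i+1`). -/
def blk (Λ : Finset ℕ) {n : ℕ} (i : Fin n) : ℕ :=
  ((Finset.Icc 1 (i : ℕ)).filter (fun k => k ∉ Λ)).card

/-- The diagonal matrix `H^i` whose first `i` diagonal entries are `(n−i)/n` and whose
last `n−i` entries are `−i/n`. -/
def Hmat (n i : ℕ) : Matrix (Fin n) (Fin n) ℝ :=
  Matrix.diagonal (fun t : Fin n =>
    if (t : ℕ) < i then ((n : ℝ) - (i : ℝ)) / (n : ℝ) else -(i : ℝ) / (n : ℝ))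

/-- Membership in `a_{Λ'}`: the real span of the `H^i` with `i ∈ {1,…,n−1}`, `i ∉ Λ'`. -/
def inA (n : ℕ) (Λ : Finset ℕ) (X : Matrix (Fin n) (Fin n) ℝ) : Prop :=
  X ∈ Submodule.span ℝ
    {M : Matrix (Fin n) (Fin n) ℝ |
      ∃ i ∈ Finset.Icc 1 (n - 1), i ∉ Λ ∧ M = Hmat n i}

/-- Membership in `n_{Λ'}`: matrices with `X_{ij} = 0` unless `b(i) < b(j)`. -/
def inN (n : ℕ) (Λ : Finset ℕ) (X : Matrix (Fin n) (Fin n) ℝ) : Prop :=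
  ∀ i j : Fin n, ¬ blk Λ i < blk Λ j → X i j = 0

/-- Membership in `s_{Λ'} = a_{Λ'} + n_{Λ'}`. -/
def inS (n : ℕ) (Λ : Finset ℕ) (X : Matrix (Fin n) (Fin n) ℝ) : Prop :=
  ∃ A N : Matrix (Fin n) (Fin n) ℝ, inA n Λ A ∧ inN n Λ N ∧ X = A + N

lemma tele_sum (e : ℕ → ℝ) : ∀ (m a : ℕ), a ≤ m →
    ∑ i ∈ Finset.Icc (a+1) m, (e (i-1) - e i) = e a - e m := by
  intro m
  induction m with
  | zero => intro a ha; interval_cases a; simp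
  | succ m ih =>
    intro a ha
    rcases Nat.lt_or_ge a (m+1) with h | h
    · have h' : a ≤ m := by omega
      rw [Finset.sum_Icc_succ_top (by omega), ih a h']
      simp
    · have : a = m+1 := by omega
      subst this
      rw [Finset.Icc_eq_empty (by omega)]
      simp

lemma abel_sum (e : ℕ → ℝ) : ∀ m : ℕ, ∑ i ∈ Finset.Icc 1 m, (e (i-1) - e i) * (i : ℝ)
    = (∑ j ∈ Finset.range (m+1), e j) - ((m : ℝ)+1) * e m := by
  intro m
  induction m with
  | zero => simp
  | succ m ih =>
    rw [Finset.sum_Icc_succ_top (by omega), ih, Finset.sum_range_succ (n := m+1)]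
    push_cast
    ring

lemma blk_lt {n : ℕ} (Λ : Finset ℕ) (i : ℕ) (hi1 : 1 ≤ i) (hiΛ : i ∉ Λ)
    (s t : Fin n) (hs : (s:ℕ) < i) (ht : i ≤ (t:ℕ)) : blk Λ s < blk Λ t := by
  apply Finset.card_lt_card
  constructor
  · exact Finset.monotone_filter_left _ (Finset.Icc_subset_Icc le_rfl (by omega))
  · intro hsub
    have hmem : i ∈ (Finset.Icc 1 (t:ℕ)).filter (fun k => k ∉ Λ) := by
      simp [Finset.mem_filter, Finset.mem_Icc]
      exact ⟨⟨hi1, ht⟩, hiΛ⟩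
    have := hsub hmem
    simp [Finset.mem_filter, Finset.mem_Icc] at this
    omega

lemma blk_consec {n : ℕ} (Λ : Finset ℕ) (i : ℕ) (hi1 : 1 ≤ i) (hiΛ : i ∈ Λ)
    (s t : Fin n) (hs : (s:ℕ) = i-1) (ht : (t:ℕ) = i) : blk Λ s = blk Λ t := by
  unfold blk
  rw [hs, ht]
  have h1 : Finset.Icc 1 i = insert i (Finset.Icc 1 (i-1)) := by
    ext k; simp [Finset.mem_Icc]; omega
  rw [h1, Finset.filter_insert, if_neg (by simpa using hiΛ)]

lemma Hmat_trace (n i : ℕ) (hi : i ≤ n) (hn : 1 ≤ n) : Matrix.trace (Hmat n i) = 0 := by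
  have hn0 : (n : ℝ) ≠ 0 := by positivity
  rw [Hmat, Matrix.trace_diagonal]
  rw [Fin.sum_univ_eq_sum_range (fun k => if k < i then ((n : ℝ) - i) / n else -(i:ℝ)/n) n]
  rw [Finset.range_eq_Ico, ← Finset.sum_Ico_consecutive _ (Nat.zero_le i) hi]
  rw [Finset.sum_congr rfl (fun k hk => if_pos (by simp [Finset.mem_Ico] at hk; omega)),
      Finset.sum_congr rfl (g := fun _ => -(i:ℝ)/n)
        (fun k hk => if_neg (by simp [Finset.mem_Ico] at hk; omega))]
  simp [Finset.sum_const, Nat.card_Ico, nsmul_eq_mul]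
  rw [Nat.cast_sub hi]
  field_simp
  ring

/-- elements of `a` are diagonal, block-constant, trace zero -/

lemma inA_props {n : ℕ} (Λ : Finset ℕ) (hn : 1 ≤ n) {X : Matrix (Fin n) (Fin n) ℝ}
    (h : inA n Λ X) :
    (∀ i j : Fin n, i ≠ j → X i j = 0) ∧
    (∀ i j : Fin n, blk Λ i = blk Λ j → X i i = X j j) ∧ Matrix.trace X = 0 := by
  induction h using Submodule.span_induction with
  | mem M hM =>
    obtain ⟨i, hiIcc, hiΛ, rfl⟩ := hM
    simp only [Finset.mem_Icc] at hiIcc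
    refine ⟨fun s t hst => Matrix.diagonal_apply_ne _ hst, fun s t hst => ?_, ?_⟩
    · rw [Hmat, Matrix.diagonal_apply_eq, Matrix.diagonal_apply_eq]
      have key : ((s:ℕ) < i ↔ (t:ℕ) < i) := by
        constructor
        · intro h1; by_contra h2
          exact absurd hst (Nat.ne_of_lt (blk_lt Λ i hiIcc.1 hiΛ s t h1 (by omega)))
        · intro h1; by_contra h2
          exact absurd hst.symm (Nat.ne_of_lt (blk_lt Λ i hiIcc.1 hiΛ t s h1 (by omega)))
      by_cases hs : (s:ℕ) < i
      · rw [if_pos hs, if_pos (key.mp hs)]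
      · rw [if_neg hs, if_neg (fun ht => hs (key.mpr ht))]
    · exact Hmat_trace n i (by omega) hn
  | zero => exact ⟨by simp, by simp, by simp⟩
  | add x y hx hy ihx ihy =>
    exact ⟨fun i j hij => by simp [Matrix.add_apply, ihx.1 i j hij, ihy.1 i j hij],
      fun i j hij => by simp [Matrix.add_apply, ihx.2.1 i j hij, ihy.2.1 i j hij],
      by simp [Matrix.trace_add, ihx.2.2, ihy.2.2]⟩
  | smul c x hx ihx =>
    exact ⟨fun i j hij => by simp [Matrix.smul_apply, ihx.1 i j hij],
      fun i j hij => by simp [Matrix.smul_apply, ihx.2.1 i j hij],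
      by simp [Matrix.trace_smul, ihx.2.2]⟩

lemma diag_mem_span {n : ℕ} (Λ : Finset ℕ) (hn : 1 ≤ n) (d : Fin n → ℝ)
    (hbc : ∀ s t : Fin n, blk Λ s = blk Λ t → d s = d t)
    (htr : ∑ t, d t = 0) : inA n Λ (Matrix.diagonal d) := by
  have hn0 : (n : ℝ) ≠ 0 := by positivity
  set e : ℕ → ℝ := fun j => d ⟨min j (n-1), by omega⟩ with he
  have het : ∀ t : Fin n, e (t : ℕ) = d t := by
    intro t
    have : min (t : ℕ) (n-1) = (t : ℕ) := by omega
    simp [he, this]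
  have hcΛ : ∀ i ∈ Finset.Icc 1 (n-1), i ∈ Λ → e (i-1) - e i = 0 := by
    intro i hi hiΛ
    simp only [Finset.mem_Icc] at hi
    have hb : blk Λ (⟨min (i-1) (n-1), by omega⟩ : Fin n)
        = blk Λ (⟨min i (n-1), by omega⟩ : Fin n) := by
      apply blk_consec Λ i hi.1 hiΛ
      · simp; omega
      · simp; omega
    have := hbc _ _ hb
    simp [he, this]
  have hesum : ∑ j ∈ Finset.range n, e j = 0 := by
    rw [← Fin.sum_univ_eq_sum_range e n]
    rw [Finset.sum_congr rfl (fun t _ => het t)]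
    exact htr
  have key : Matrix.diagonal d
      = ∑ i ∈ (Finset.Icc 1 (n-1)).filter (fun i => i ∉ Λ), (e (i-1) - e i) • Hmat n i := by
    ext s t
    rw [Matrix.sum_apply]
    by_cases hst : s = t
    · subst hst
      rw [Matrix.diagonal_apply_eq]
      have hterm : ∀ i, ((e (i-1) - e i) • Hmat n i) s s
          = (e (i-1) - e i) * (if (s:ℕ) < i then ((n:ℝ) - i)/n else -(i:ℝ)/n) := by
        intro i
        rw [Matrix.smul_apply, Hmat, Matrix.diagonal_apply_eq, smul_eq_mul]
      rw [Finset.sum_congr rfl (fun i _ => hterm i)]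
      have hsle : (s:ℕ) ≤ n - 1 := by omega
      rw [Finset.sum_subset (Finset.filter_subset (fun i => i ∉ Λ) (Finset.Icc 1 (n-1)))
        (fun i hi hif => by
          have hiΛ : i ∈ Λ := by simpa [Finset.mem_filter, hi] using hif
          rw [hcΛ i hi hiΛ, zero_mul])]
      have hrw : ∀ i ∈ Finset.Icc 1 (n-1),
          ((e (i-1) - e i) * if (s:ℕ) < i then ((n:ℝ) - i)/n else -(i:ℝ)/n)
          = (if (s:ℕ) < i then e (i-1) - e i else 0) - (e (i-1) - e i) * (i:ℝ) / n := by
        intro i _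
        by_cases h : (s:ℕ) < i
        · rw [if_pos h, if_pos h]
          field_simp
        · rw [if_neg h, if_neg h]
          ring
      rw [Finset.sum_congr rfl hrw, Finset.sum_sub_distrib]
      have h1 : ∑ i ∈ Finset.Icc 1 (n-1), (if (s:ℕ) < i then e (i-1) - e i else 0)
          = e (s:ℕ) - e (n-1) := by
        rw [← Finset.sum_filter]
        have hset : (Finset.Icc 1 (n-1)).filter (fun i => (s:ℕ) < i)
            = Finset.Icc ((s:ℕ)+1) (n-1) := by
          ext k; simp [Finset.mem_Icc, Finset.mem_filter]; omega
        rw [hset]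
        exact tele_sum e (n-1) (s:ℕ) hsle
      have h2 : ∑ i ∈ Finset.Icc 1 (n-1), (e (i-1) - e i) * (i:ℝ) / n = -(e (n-1)) := by
        rw [← Finset.sum_div]
        have habel := abel_sum e (n-1)
        rw [Nat.sub_add_cancel hn] at habel
        rw [habel, hesum, Nat.cast_sub hn]
        push_cast
        field_simp
        ring
      rw [h1, h2, het s]
      ring
    · rw [Matrix.diagonal_apply_ne _ hst]
      rw [Finset.sum_congr rfl (fun i _ => ?_), Finset.sum_const_zero]
      rw [Matrix.smul_apply, Hmat, Matrix.diagonal_apply_ne _ hst, smul_zero]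
  rw [key]
  apply Submodule.sum_mem
  intro i hi
  simp only [Finset.mem_filter] at hi
  exact Submodule.smul_mem _ _ (Submodule.subset_span ⟨i, hi.1, hi.2, rfl⟩)

lemma inS_iff {n : ℕ} (Λ : Finset ℕ) (hn : 1 ≤ n) (X : Matrix (Fin n) (Fin n) ℝ) :
    inS n Λ X ↔
      ((∀ i j : Fin n, ¬ blk Λ i < blk Λ j → i ≠ j → X i j = 0) ∧
       (∀ i j : Fin n, blk Λ i = blk Λ j → X i i = X j j) ∧ Matrix.trace X = 0) := by
  constructor
  · rintro ⟨A, N, hA, hN, rfl⟩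
    obtain ⟨hA1, hA2, hA3⟩ := inA_props Λ hn hA
    have hNdiag : ∀ i : Fin n, N i i = 0 := fun i => hN i i (lt_irrefl _)
    refine ⟨fun i j h hij => ?_, fun i j h => ?_, ?_⟩
    · rw [Matrix.add_apply, hA1 i j hij, hN i j h, add_zero]
    · rw [Matrix.add_apply, Matrix.add_apply, hNdiag i, hNdiag j, add_zero, add_zero]
      exact hA2 i j h
    · rw [Matrix.trace_add, hA3, zero_add, Matrix.trace]
      simp [Matrix.diag, hNdiag]
  · rintro ⟨h1, h2, h3⟩
    refine ⟨Matrix.diagonal (fun i => X i i), X - Matrix.diagonal (fun i => X i i),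
      ?_, ?_, by abel⟩
    · apply diag_mem_span Λ hn _ h2
      simpa [Matrix.trace, Matrix.diag] using h3
    · intro i j h
      by_cases hij : i = j
      · subst hij
        simp [Matrix.sub_apply]
      · rw [Matrix.sub_apply, Matrix.diagonal_apply_ne _ hij, h1 i j h hij, sub_zero]

/-- For `n ≥ 2` and a proper subset `Λ'` of `{1,…,n−1}`, the solvable
subalgebra `s_{Λ'} = a_{Λ'} + n_{Λ'}` is autoparallel in `sl(n,ℝ)` for the product
`∇_X Y = XY − (tr(XY)/n)·I_n`. -/
theorem solvable_autoparallel_sl_real (n : ℕ) (hn : 2 ≤ n)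
    (Λ : Finset ℕ) (hΛ : Λ ⊆ Finset.Icc 1 (n - 1)) (hΛne : Λ ≠ Finset.Icc 1 (n - 1)) :
    ∀ X Y : Matrix (Fin n) (Fin n) ℝ, inS n Λ X → inS n Λ Y →
      inS n Λ (X * Y - (Matrix.trace (X * Y) / (n : ℝ)) • (1 : Matrix (Fin n) (Fin n) ℝ)) := by
  intro X Y hX hY
  have hn1 : 1 ≤ n := by omega
  have hn0 : (n : ℝ) ≠ 0 := by positivity
  obtain ⟨hX1, hX2, hX3⟩ := (inS_iff Λ hn1 X).mp hX
  obtain ⟨hY1, hY2, hY3⟩ := (inS_iff Λ hn1 Y).mp hY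
  rw [inS_iff Λ hn1]
  set c : ℝ := Matrix.trace (X * Y) / (n : ℝ) with hc
  have hentry : ∀ i j : Fin n,
      (X * Y - c • (1 : Matrix (Fin n) (Fin n) ℝ)) i j
        = (∑ k, X i k * Y k j) - c * (if i = j then 1 else 0) := by
    intro i j
    rw [Matrix.sub_apply, Matrix.smul_apply, Matrix.mul_apply, Matrix.one_apply, smul_eq_mul]
  refine ⟨fun i j h hij => ?_, fun i j h => ?_, ?_⟩
  · rw [hentry, if_neg hij, mul_zero, sub_zero]
    apply Finset.sum_eq_zero
    intro k _
    by_cases hik : blk Λ i < blk Λ k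
    · by_cases hkj : blk Λ k < blk Λ j
      · exact absurd (lt_trans hik hkj) h
      · by_cases hkj' : k = j
        · subst hkj'
          exact absurd hik h
        · rw [hY1 k j hkj hkj', mul_zero]
    · by_cases hik' : i = k
      · subst hik'
        by_cases hkj : blk Λ i < blk Λ j
        · exact absurd hkj h
        · rw [hY1 i j hkj hij, mul_zero]
      · rw [hX1 i k hik hik', zero_mul]
  · rw [hentry, hentry, if_pos rfl, if_pos rfl]
    have hsum : ∀ i : Fin n, (∑ k, X i k * Y k i) = X i i * Y i i := by
      intro i
      apply Finset.sum_eq_single i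
      · intro k _ hki
        by_cases hik : blk Λ i < blk Λ k
        · rw [hY1 k i (fun hlt => lt_asymm hik hlt) hki, mul_zero]
        · rw [hX1 i k hik (Ne.symm hki), zero_mul]
      · intro habs
        exact absurd (Finset.mem_univ i) habs
    rw [hsum i, hsum j, hX2 i j h, hY2 i j h]
  · have : Matrix.trace (X * Y - c • (1 : Matrix (Fin n) (Fin n) ℝ))
        = Matrix.trace (X * Y) - c * n := by
      rw [Matrix.trace_sub, Matrix.trace_smul, Matrix.trace_one, smul_eq_mul]
      simp
    rw [this, hc]
    field_simp
    ring

end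
end

section
/- Let n ≥ 2 and Λ' a proper subset of {1,…,n−1}, and let s_{Λ'} = a_{Λ'} + n_{Λ'} ⊆ sl(n,ℝ) be the associated solvable subalgebra. Then the product ∇_X Y := XY − (tr(XY)/n)·I_n restricted to s_{Λ'} is not flat: there exist X, Y, Z ∈ s_{Λ'} with R(X,Y)Z := ∇_X(∇_Y Z) − ∇_Y(∇_X Z) − ∇_{[X,Y]}Z ≠ 0. (For instance X = E_{1n} and Y = Z = H^i for any i ∈ {1,…,n−1} with i ∉ Λ' give R(X,Y)Z = −(i(n−i)/n²)·E_{1n}.) -/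
noncomputable section

/-- The product `∇_X Y = XY − (tr(XY)/n)·I_n` on `sl(n,ℝ)`. -/
def nabSL (n : ℕ) (X Y : Matrix (Fin n) (Fin n) ℝ) : Matrix (Fin n) (Fin n) ℝ :=
  X * Y - (Matrix.trace (X * Y) / (n : ℝ)) • (1 : Matrix (Fin n) (Fin n) ℝ)

lemma ED {n : ℕ} (d : Fin n → ℝ) (e0 e1 : Fin n) :
    Matrix.single e0 e1 (1:ℝ) * Matrix.diagonal d
      = d e1 • Matrix.single e0 e1 (1:ℝ) := by
  ext a b
  simp [Matrix.mul_diagonal, Matrix.single]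
  aesop

lemma DE {n : ℕ} (d : Fin n → ℝ) (e0 e1 : Fin n) :
    Matrix.diagonal d * Matrix.single e0 e1 (1:ℝ)
      = d e0 • Matrix.single e0 e1 (1:ℝ) := by
  ext a b
  simp [Matrix.diagonal_mul, Matrix.single]
  aesop

lemma trE {n : ℕ} (e0 e1 : Fin n) (h : e1 ≠ e0) (r : ℝ) :
    Matrix.trace (r • Matrix.single e0 e1 (1:ℝ)) = 0 := by
  rw [Matrix.trace_smul, Matrix.trace_single_eq_of_ne e0 e1 1 h.symm, smul_zero]

lemma curv_eq {n : ℕ} (d : Fin n → ℝ) (e0 e1 : Fin n) (h : e1 ≠ e0)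
    (E D : Matrix (Fin n) (Fin n) ℝ) (hE : E = Matrix.single e0 e1 (1:ℝ))
    (hD : D = Matrix.diagonal d) :
    nabSL n E (nabSL n D D) - nabSL n D (nabSL n E D) - nabSL n ⁅E, D⁆ D
      = (-(Matrix.trace (D * D) / (n:ℝ))) • E := by
  subst hE hD
  set c : ℝ := Matrix.trace (Matrix.diagonal d * Matrix.diagonal d) / (n:ℝ) with hc
  set E := Matrix.single e0 e1 (1:ℝ) with hEd
  have hED : E * Matrix.diagonal d = d e1 • E := ED d e0 e1
  have hDE : Matrix.diagonal d * E = d e0 • E := DE d e0 e1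
  have h1 : nabSL n (Matrix.diagonal d) (Matrix.diagonal d)
      = Matrix.diagonal d * Matrix.diagonal d - c • 1 := rfl
  have h2 : nabSL n E (Matrix.diagonal d) = d e1 • E := by
    rw [nabSL, hED, trE e0 e1 h, zero_div, zero_smul, sub_zero]
  have h3 : nabSL n E (Matrix.diagonal d * Matrix.diagonal d - c • 1)
      = (d e1 * d e1 - c) • E := by
    have hm : E * (Matrix.diagonal d * Matrix.diagonal d - c • 1)
        = (d e1 * d e1 - c) • E := by
      rw [Matrix.mul_sub, ← Matrix.mul_assoc, hED, Matrix.smul_mul, hED,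
        Matrix.mul_smul, Matrix.mul_one, smul_smul, sub_smul]
    rw [nabSL, hm, trE e0 e1 h, zero_div, zero_smul, sub_zero]
  have h4 : nabSL n (Matrix.diagonal d) (d e1 • E) = (d e1 * d e0) • E := by
    have hm : Matrix.diagonal d * (d e1 • E) = (d e1 * d e0) • E := by
      rw [Matrix.mul_smul, hDE, smul_smul]
    rw [nabSL, hm, trE e0 e1 h, zero_div, zero_smul, sub_zero]
  have h5 : ⁅E, Matrix.diagonal d⁆ = (d e1 - d e0) • E := by
    rw [Ring.lie_def, hED, hDE, sub_smul]
  have h6 : nabSL n ((d e1 - d e0) • E) (Matrix.diagonal d)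
      = ((d e1 - d e0) * d e1) • E := by
    have hm : (d e1 - d e0) • E * Matrix.diagonal d = ((d e1 - d e0) * d e1) • E := by
      rw [Matrix.smul_mul, hED, smul_smul, mul_comm]
    rw [nabSL, hm, trE e0 e1 h, zero_div, zero_smul, sub_zero]
  rw [h1, h3, h2, h4, h5, h6, ← sub_smul, ← sub_smul]
  congr 1
  ring

/-- For `n ≥ 2` and a proper subset `Λ'` of `{1,…,n−1}`, the product
`∇_X Y = XY − (tr(XY)/n)·I_n` restricted to the solvable subalgebra `s_{Λ'}` is not
flat: some `X, Y, Z ∈ s_{Λ'}` have nonvanishing curvature. -/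
theorem solvable_not_flat_sl_real (n : ℕ) (hn : 2 ≤ n)
    (Λ : Finset ℕ) (hΛ : Λ ⊆ Finset.Icc 1 (n - 1)) (hΛne : Λ ≠ Finset.Icc 1 (n - 1)) :
    ∃ X Y Z : Matrix (Fin n) (Fin n) ℝ, inS n Λ X ∧ inS n Λ Y ∧ inS n Λ Z ∧
      nabSL n X (nabSL n Y Z) - nabSL n Y (nabSL n X Z) - nabSL n ⁅X, Y⁆ Z ≠ 0 := by
  obtain ⟨i, hi, hiΛ⟩ := Finset.exists_of_ssubset (hΛ.ssubset_of_ne hΛne)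
  obtain ⟨hi1, hi2⟩ := Finset.mem_Icc.mp hi
  have hin : i < n := by omega
  set e0 : Fin n := ⟨0, by omega⟩ with he0
  set e1 : Fin n := ⟨n - 1, by omega⟩ with he1
  have hne : e1 ≠ e0 := by
    simp only [he0, he1, Fin.ne_iff_vne]
    omega
  set d : Fin n → ℝ := fun t : Fin n =>
    if (t : ℕ) < i then ((n : ℝ) - (i : ℝ)) / (n : ℝ) else -(i : ℝ) / (n : ℝ) with hd
  set E : Matrix (Fin n) (Fin n) ℝ := Matrix.single e0 e1 (1:ℝ) with hE
  have hH : Hmat n i = Matrix.diagonal d := rfl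
  refine ⟨E, Hmat n i, Hmat n i, ?_, ?_, ?_, ?_⟩
  · -- E ∈ s
    refine ⟨0, E, Submodule.zero_mem _, ?_, (zero_add E).symm⟩
    have hblk : blk Λ e0 < blk Λ e1 := by
      have h0 : blk Λ e0 = 0 := by
        simp [blk, he0, Finset.Icc_eq_empty_of_lt]
      have h1 : 0 < blk Λ e1 := by
        refine Finset.card_pos.mpr ⟨i, ?_⟩
        simp only [Finset.mem_filter, Finset.mem_Icc]
        exact ⟨⟨hi1, hi2⟩, hiΛ⟩
      omega
    intro a b hab
    by_cases hc : e0 = a ∧ e1 = b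
    · exact absurd (hc.1 ▸ hc.2 ▸ hblk) hab
    · rw [hE, Matrix.single]
      simp only [Matrix.of_apply, ite_eq_right_iff]
      intro h; exact absurd h hc
  · exact ⟨Hmat n i, 0, Submodule.subset_span ⟨i, hi, hiΛ, rfl⟩,
      fun _ _ _ => rfl, (add_zero _).symm⟩
  · exact ⟨Hmat n i, 0, Submodule.subset_span ⟨i, hi, hiΛ, rfl⟩,
      fun _ _ _ => rfl, (add_zero _).symm⟩
  · rw [curv_eq d e0 e1 hne E (Hmat n i) hE hH]
    have htr : Matrix.trace (Hmat n i * Hmat n i) = ∑ t : Fin n, d t * d t := by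
      rw [hH, Matrix.diagonal_mul_diagonal, Matrix.trace_diagonal]
    have hpos : 0 < Matrix.trace (Hmat n i * Hmat n i) := by
      rw [htr]
      refine Finset.sum_pos' (fun t _ => mul_self_nonneg _) ⟨e0, Finset.mem_univ _, ?_⟩
      have he0v : ((e0 : ℕ)) = 0 := rfl
      have hd0 : d e0 = ((n : ℝ) - (i : ℝ)) / (n : ℝ) := by
        simp only [hd]
        rw [if_pos (by omega : ((e0 : ℕ)) < i)]
      rw [hd0]
      have h1 : (i:ℝ) < (n:ℝ) := by exact_mod_cast hin
      have h2 : (0:ℝ) < (n:ℝ) := by exact_mod_cast (by omega : 0 < n)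
      have := div_pos (by linarith : (0:ℝ) < (n:ℝ) - (i:ℝ)) h2
      nlinarith
    have hcne : -(Matrix.trace (Hmat n i * Hmat n i) / (n:ℝ)) ≠ 0 := by
      have : (0:ℝ) < (n:ℝ) := by exact_mod_cast (by omega : 0 < n)
      have := div_pos hpos this
      linarith
    have hEne : E ≠ 0 := by
      intro h
      have := congrFun (congrFun h e0) e1
      simp [hE, Matrix.single] at this
    exact smul_ne_zero hcne hEne


end
end

section
/- Let n ≥ 2 and Λ' a proper subset of {1,…,n−1}, and let s_{Λ'} ⊆ sl(n,ℝ) be the associated solvable subalgebra with the induced product ∇_X Y := XY − (tr(XY)/n)·I_n. Then ∇ on s_{Λ'} is projectively equivalent to a flat affine connection: there exists an ℝ-linear functional λ : s_{Λ'} → ℝ such that the modified product ∇^λ_X Y := ∇_X Y + λ(X)·Y + λ(Y)·X has identically vanishing curvature, i.e. ∇^λ_X(∇^λ_Y Z) − ∇^λ_Y(∇^λ_X Z) − ∇^λ_{[X,Y]} Z = 0 for all X, Y, Z ∈ s_{Λ'}. -/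
noncomputable section

/-- The projectively modified product `∇^λ_X Y = ∇_X Y + λ(X)·Y + λ(Y)·X`. -/
def nabLam (n : ℕ) (lam : Matrix (Fin n) (Fin n) ℝ →ₗ[ℝ] ℝ)
    (X Y : Matrix (Fin n) (Fin n) ℝ) : Matrix (Fin n) (Fin n) ℝ :=
  nabSL n X Y + lam X • Y + lam Y • X

/-- max block value -/
def Bm (n : ℕ) (Λ : Finset ℕ) : ℕ := ((Finset.Icc 1 (n-1)).filter (fun k => k ∉ Λ)).card

/-- last block -/
def Lset (n : ℕ) (Λ : Finset ℕ) : Finset (Fin n) :=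
  Finset.univ.filter (fun t => blk Λ t = Bm n Λ)

lemma blk_le (n : ℕ) (Λ : Finset ℕ) (t : Fin n) : blk Λ t ≤ Bm n Λ := by
  apply Finset.card_le_card
  apply Finset.filter_subset_filter
  apply Finset.Icc_subset_Icc_right
  have := t.isLt
  omega

lemma last_mem (n : ℕ) (hn : 0 < n) (Λ : Finset ℕ) :
    (⟨n-1, by omega⟩ : Fin n) ∈ Lset n Λ := by
  unfold Lset
  rw [Finset.mem_filter]
  exact ⟨Finset.mem_univ _, rfl⟩


lemma not_lt_of_memL {n : ℕ} {Λ : Finset ℕ} {t : Fin n} (ht : t ∈ Lset n Λ)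
    {i : ℕ} (hi : i ∈ Finset.Icc 1 (n-1)) (hiΛ : i ∉ Λ) : ¬ (t : ℕ) < i := by
  intro hlt
  have hmem : t ∈ Finset.univ.filter (fun t => blk Λ t = Bm n Λ) := ht
  have hbt : blk Λ t = Bm n Λ := by simpa [Lset] using hmem
  have hsub : ((Finset.Icc 1 (t : ℕ)).filter (fun k => k ∉ Λ)) ⊆
      ((Finset.Icc 1 (n-1)).filter (fun k => k ∉ Λ)) := by
    apply Finset.filter_subset_filter
    apply Finset.Icc_subset_Icc_right
    have := t.isLt; omega
  have hlt' : ((Finset.Icc 1 (t : ℕ)).filter (fun k => k ∉ Λ)).card <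
      ((Finset.Icc 1 (n-1)).filter (fun k => k ∉ Λ)).card := by
    apply Finset.card_lt_card
    refine (Finset.ssubset_iff_of_subset hsub).2 ⟨i, ?_, ?_⟩
    · simp only [Finset.mem_filter]
      exact ⟨hi, hiΛ⟩
    · simp only [Finset.mem_filter, Finset.mem_Icc]
      intro h
      omega
  have : blk Λ t < Bm n Λ := hlt'
  omega

lemma rowN {n : ℕ} {Λ : Finset ℕ} {X : Matrix (Fin n) (Fin n) ℝ} (hX : inN n Λ X)
    {t : Fin n} (ht : t ∈ Lset n Λ) (s : Fin n) : X t s = 0 := by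
  apply hX
  have hbt : blk Λ t = Bm n Λ := by simpa [Lset] using ht
  have := blk_le n Λ s
  omega

lemma rowA {n : ℕ} (hn : 0 < n) {Λ : Finset ℕ} {A : Matrix (Fin n) (Fin n) ℝ}
    (hA : inA n Λ A) : ∀ t ∈ Lset n Λ, ∀ s : Fin n,
      A t s = if s = t then A ⟨n-1, by omega⟩ ⟨n-1, by omega⟩ else 0 := by
  induction hA using Submodule.span_induction with
  | mem M hM =>
    obtain ⟨i, hi, hiΛ, rfl⟩ := hM
    intro t ht s
    have hlast := last_mem n hn Λ
    have h1 : ¬ ((⟨n-1, by omega⟩ : Fin n) : ℕ) < i := not_lt_of_memL hlast hi hiΛ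
    have h2 : ¬ (t : ℕ) < i := not_lt_of_memL ht hi hiΛ
    simp only [Hmat, Matrix.diagonal_apply, if_neg h1, if_neg h2]
    by_cases hst : s = t
    · simp [hst]
    · simp [Ne.symm hst, hst]
  | zero => intro t ht s; simp
  | add x y hx hy ihx ihy =>
    intro t ht s
    simp only [Matrix.add_apply, ihx t ht s, ihy t ht s]
    split <;> simp
  | smul a x hx ihx =>
    intro t ht s
    simp only [Matrix.smul_apply, ihx t ht s, smul_eq_mul]
    split <;> simp

lemma rowS {n : ℕ} (hn : 0 < n) {Λ : Finset ℕ} {X : Matrix (Fin n) (Fin n) ℝ}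
    (hX : inS n Λ X) : ∀ t ∈ Lset n Λ, ∀ s : Fin n,
      X t s = if s = t then X ⟨n-1, by omega⟩ ⟨n-1, by omega⟩ else 0 := by
  obtain ⟨A, N, hA, hN, rfl⟩ := hX
  intro t ht s
  have hlast := last_mem n hn Λ
  simp only [Matrix.add_apply, rowN hN ht s, rowN hN hlast, add_zero,
    rowA hn hA t ht s]


def lamF (n : ℕ) (Λ : Finset ℕ) : Matrix (Fin n) (Fin n) ℝ →ₗ[ℝ] ℝ where
  toFun X := (-(1:ℝ)/((Lset n Λ).card : ℝ)) * ∑ t ∈ Lset n Λ, X t t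
  map_add' X Y := by simp [Finset.sum_add_distrib]; ring
  map_smul' a X := by
    simp only [Matrix.smul_apply, smul_eq_mul, RingHom.id_apply, Finset.mul_sum]
    apply Finset.sum_congr rfl
    intros; ring

lemma card_L_pos {n : ℕ} (hn : 0 < n) (Λ : Finset ℕ) : 0 < (Lset n Λ).card :=
  Finset.card_pos.2 ⟨_, last_mem n hn Λ⟩

lemma lam_one {n : ℕ} (hn : 0 < n) (Λ : Finset ℕ) : lamF n Λ 1 = -1 := by
  have hc : ((Lset n Λ).card : ℝ) ≠ 0 := by
    exact_mod_cast (card_L_pos hn Λ).ne'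
  simp only [lamF, LinearMap.coe_mk, AddHom.coe_mk, Matrix.one_apply_eq,
    Finset.sum_const, nsmul_eq_mul, mul_one]
  field_simp

lemma lam_eq {n : ℕ} (hn : 0 < n) {Λ : Finset ℕ} {X : Matrix (Fin n) (Fin n) ℝ}
    (hX : inS n Λ X) : lamF n Λ X = -(X ⟨n-1, by omega⟩ ⟨n-1, by omega⟩) := by
  have hc : ((Lset n Λ).card : ℝ) ≠ 0 := by
    exact_mod_cast (card_L_pos hn Λ).ne'
  have hsum : ∑ t ∈ Lset n Λ, X t t
      = (Lset n Λ).card • (X ⟨n-1, by omega⟩ ⟨n-1, by omega⟩) := by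
    rw [← Finset.sum_const]
    apply Finset.sum_congr rfl
    intro t ht
    rw [rowS hn hX t ht t, if_pos rfl]
  simp only [lamF, LinearMap.coe_mk, AddHom.coe_mk, hsum, nsmul_eq_mul]
  field_simp

lemma lam_mul {n : ℕ} (hn : 0 < n) {Λ : Finset ℕ} {X Y : Matrix (Fin n) (Fin n) ℝ}
    (hX : inS n Λ X) (hY : inS n Λ Y) :
    lamF n Λ (X * Y) = -(lamF n Λ X * lamF n Λ Y) := by
  have hc : ((Lset n Λ).card : ℝ) ≠ 0 := by
    exact_mod_cast (card_L_pos hn Λ).ne'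
  set l : Fin n := ⟨n-1, by omega⟩ with hl
  have hdiag : ∀ t ∈ Lset n Λ, (X * Y) t t = X l l * Y l l := by
    intro t ht
    rw [Matrix.mul_apply]
    rw [Finset.sum_eq_single t]
    · rw [rowS hn hX t ht t, if_pos rfl, rowS hn hY t ht t, if_pos rfl]
    · intro s _ hst
      rw [rowS hn hX t ht s, if_neg hst, zero_mul]
    · simp
  have hsum : ∑ t ∈ Lset n Λ, (X * Y) t t = (Lset n Λ).card • (X l l * Y l l) := by
    rw [← Finset.sum_const]
    exact Finset.sum_congr rfl hdiag
  rw [lam_eq hn hX, lam_eq hn hY]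
  simp only [lamF, LinearMap.coe_mk, AddHom.coe_mk, hsum, nsmul_eq_mul]
  field_simp
  ring

lemma trace_Hmat {n i : ℕ} (hi : i ∈ Finset.Icc 1 (n-1)) :
    Matrix.trace (Hmat n i) = 0 := by
  simp only [Finset.mem_Icc] at hi
  rw [Hmat, Matrix.trace_diagonal]
  rw [Fin.sum_univ_eq_sum_range (fun k => if k < i then ((n:ℝ)-(i:ℝ))/(n:ℝ) else -(i:ℝ)/(n:ℝ))]
  rw [Finset.sum_ite]
  have h1 : (Finset.range n).filter (fun k => k < i) = Finset.range i := by
    ext k; simp; omega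
  have h2 : (Finset.range n).filter (fun k => ¬ k < i) = Finset.Ico i n := by
    ext k; simp; omega
  rw [h1, h2]
  simp only [Finset.sum_const, Finset.card_range, Nat.card_Ico, nsmul_eq_mul]
  have : ((n - i : ℕ) : ℝ) = (n : ℝ) - (i : ℝ) := by
    have h : i ≤ n := by omega
    push_cast [h]
    ring
  rw [this]
  ring

lemma trace_S {n : ℕ} {Λ : Finset ℕ} {X : Matrix (Fin n) (Fin n) ℝ}
    (hX : inS n Λ X) : Matrix.trace X = 0 := by
  obtain ⟨A, N, hA, hN, rfl⟩ := hX
  have htrN : Matrix.trace N = 0 := by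
    rw [Matrix.trace]
    apply Finset.sum_eq_zero
    intro t _
    exact hN t t (lt_irrefl _)
  have htrA : Matrix.trace A = 0 := by
    induction hA using Submodule.span_induction with
    | mem M hM => obtain ⟨i, hi, _, rfl⟩ := hM; exact trace_Hmat hi
    | zero => simp
    | add x y hx hy ihx ihy => simp [ihx, ihy]
    | smul a x hx ihx => simp [ihx]
  rw [Matrix.trace_add, htrA, htrN, add_zero]



/-- For `n ≥ 2` and a proper subset `Λ'` of `{1,…,n−1}`, the induced
product `∇` on the solvable subalgebra `s_{Λ'}` is projectively equivalent to a flat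
affine connection: for some linear functional `λ`, the modified product
`∇^λ_X Y = ∇_X Y + λ(X)·Y + λ(Y)·X` has identically vanishing curvature on `s_{Λ'}`. -/
theorem solvable_projectively_flat_to_flat (n : ℕ) (hn : 2 ≤ n)
    (Λ : Finset ℕ) (hΛ : Λ ⊆ Finset.Icc 1 (n - 1)) (hΛne : Λ ≠ Finset.Icc 1 (n - 1)) :
    ∃ lam : Matrix (Fin n) (Fin n) ℝ →ₗ[ℝ] ℝ,
      ∀ X Y Z : Matrix (Fin n) (Fin n) ℝ, inS n Λ X → inS n Λ Y → inS n Λ Z →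
        nabLam n lam X (nabLam n lam Y Z) - nabLam n lam Y (nabLam n lam X Z)
          - nabLam n lam ⁅X, Y⁆ Z = 0 := by
  have hn0 : 0 < n := by omega
  refine ⟨lamF n Λ, fun X Y Z hX hY hZ => ?_⟩
  have trX := trace_S hX
  have trY := trace_S hY
  have trZ := trace_S hZ
  have mXY := lam_mul hn0 hX hY
  have mYX := lam_mul hn0 hY hX
  have mXZ := lam_mul hn0 hX hZ
  have mYZ := lam_mul hn0 hY hZ
  have l1 := lam_one hn0 Λ
  have tc : Matrix.trace (Y * X) = Matrix.trace (X * Y) := Matrix.trace_mul_comm Y X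
  simp only [nabLam, nabSL, Ring.lie_def, mul_sub, sub_mul, mul_add, add_mul,
    mul_smul_comm, smul_mul_assoc, mul_one, one_mul, Matrix.trace_add, Matrix.trace_sub,
    Matrix.trace_smul, map_add, map_sub, map_smul, smul_smul, mul_assoc,
    trX, trY, trZ, mXY, mYX, mXZ, mYZ, l1, tc, smul_eq_mul]
  match_scalars <;> ring

end
end
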